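/- Let S : [0,1) → [0,1) be an interval translation map. Then S admits an invariant Borel probability measure, i.e., there exists a Borel probability measure μ on [0,1) such that μ(S⁻¹(A)) = μ(A) for every Borel set A. -/

import Mathlib

open MeasureTheory Set Filter Function Topology ENNReal NNReal

/-- Ultrafilter limit of a `[0,1]`-valued sequence exists. -/
lemma itm_ulim_exists (U : Ultrafilter ℕ) (f : ℕ → ℝ) (hf : ∀ m, f m ∈ Icc (0:ℝ) 1) :
    ∃ L, L ∈ Icc (0:ℝ) 1 ∧ Tendsto f (U : Filter ℕ) (𝓝 L) := by
  obtain ⟨L, hL, h⟩ := isCompact_Icc.ultrafilter_le_nhds (U.map f)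
    (by simpa using (Filter.univ_mem' hf : f ⁻¹' Icc (0:ℝ) 1 ∈ (U : Filter ℕ)))
  exact ⟨L, hL, h⟩

/-- Sum-of-jumps bound: a monotone function bounded in `[0,1]` has finitely many
points with left-jump at least `δ > 0`. -/
lemma itm_jump_finite (J : ℝ → ℝ) (hmono : Monotone J) (h0 : ∀ x, 0 ≤ J x) (h1 : ∀ x, J x ≤ 1)
    (δ : ℝ) (hδ : 0 < δ) : {y : ℝ | δ ≤ J y - leftLim J y}.Finite := by
  classical
  by_contra hinf
  -- key finset bound
  have key : ∀ s : Finset ℝ, (∀ y ∈ s, δ ≤ J y - leftLim J y) →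
      s = ∅ ∨ ∃ y ∈ s, (∀ x ∈ s, x ≤ y) ∧ δ * s.card ≤ J y := by
    intro s
    induction s using Finset.induction_on_max with
    | empty => intro _; exact Or.inl rfl
    | insert a s ha ih =>
      intro hs
      right
      have hmem : ∀ y ∈ s, δ ≤ J y - leftLim J y := fun y hy => hs y (Finset.mem_insert_of_mem hy)
      have hja : δ ≤ J a - leftLim J a := hs a (Finset.mem_insert_self a s)
      have hans : a ∉ s := fun h => lt_irrefl a (ha a h)
      rcases ih hmem with h | ⟨y, hy, hymax, hcard⟩
      · subst h
        refine ⟨a, Finset.mem_insert_self _ _, ?_, ?_⟩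
        · intro x hx; simp at hx; simp [hx]
        · have hll : 0 ≤ leftLim J a := le_trans (h0 (a - 1)) (hmono.le_leftLim (by linarith))
          simp only [Finset.card_insert_of_notMem hans, Finset.card_empty]
          push_cast
          linarith
      · refine ⟨a, Finset.mem_insert_self _ _, ?_, ?_⟩
        · intro x hx
          rcases Finset.mem_insert.1 hx with rfl | hx
          · exact le_refl x
          · exact (ha x hx).le
        · have hyla : J y ≤ leftLim J a := hmono.le_leftLim (ha y hy)
          rw [Finset.card_insert_of_notMem hans]
          push_cast
          nlinarith
  -- extract a finset of large cardinality
  set N : ℕ := ⌈δ⁻¹⌉₊ + 1 with hN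
  have hinf2 : Set.Infinite {y : ℝ | δ ≤ J y - leftLim J y} := hinf
  obtain ⟨T, hTsub, hTfin, hTcard⟩ := hinf2.exists_subset_ncard_eq N
  set s : Finset ℝ := hTfin.toFinset with hsdef
  have hscard : s.card = N := by
    rw [hsdef, ← Set.ncard_coe_finset, Set.Finite.coe_toFinset]; exact hTcard
  have hsmem : ∀ y ∈ s, δ ≤ J y - leftLim J y := by
    intro y hy
    have hyT : y ∈ T := by rwa [hsdef, Set.Finite.mem_toFinset] at hy
    exact hTsub hyT
  rcases key s hsmem with h | ⟨y, hy, _, hcard⟩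
  · have : (0:ℕ) = N := by rw [← hscard, h]; simp
    omega
  · have h1' : J y ≤ 1 := h1 y
    rw [hscard] at hcard
    have hge : δ⁻¹ ≤ (⌈δ⁻¹⌉₊ : ℝ) := Nat.le_ceil _
    have : δ * (N : ℝ) ≥ δ * δ⁻¹ + δ := by
      rw [hN]; push_cast
      have := mul_le_mul_of_nonneg_left hge hδ.le
      nlinarith
    rw [mul_inv_cancel₀ hδ.ne'] at this
    linarith

/-- A genuine periodic orbit of `S` inside `[0,1)` yields an invariant probability measure. -/
lemma itm_periodic_invariant (S : ℝ → ℝ) (p : ℕ) (hp : 0 < p) (z : ℕ → ℝ)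
    (hz : ∀ j, z j ∈ Ico (0:ℝ) 1) (hSz : ∀ j, S (z j) = z (j+1)) (hper : z p = z 0) :
    ∃ μ : Measure ℝ, IsProbabilityMeasure μ ∧ μ (Ico (0 : ℝ) 1) = 1 ∧
      ∀ A : Set ℝ, MeasurableSet A → μ (S ⁻¹' A) = μ A := by
  classical
  set μ : Measure ℝ := (p : ℝ≥0∞)⁻¹ • ∑ j ∈ Finset.range p, Measure.dirac (z j) with hμ
  have hdirac : ∀ (x : ℝ) (A : Set ℝ), Measure.dirac x A = if x ∈ A then 1 else 0 := by
    intro x A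
    split_ifs with h
    · exact Measure.dirac_apply_of_mem h
    · refine le_antisymm ?_ (by simp)
      have h0 : Measure.dirac x ({x}ᶜ : Set ℝ) = 0 := by
        rw [Measure.dirac_apply' _ (MeasurableSet.compl (measurableSet_singleton x))]
        simp
      calc Measure.dirac x A ≤ Measure.dirac x ({x}ᶜ : Set ℝ) :=
            measure_mono (fun y hy => by rintro rfl; exact h hy)
        _ = 0 := h0
  have hsum : ∀ (q : ℕ) (A : Set ℝ), (∑ j ∈ Finset.range q, Measure.dirac (z j)) A
      = ∑ j ∈ Finset.range q, (if z j ∈ A then (1:ℝ≥0∞) else 0) := by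
    intro q A
    induction q with
    | zero => simp
    | succ q ih =>
      rw [Finset.sum_range_succ, Finset.sum_range_succ, Measure.add_apply, ih, hdirac]
  have happly : ∀ A : Set ℝ, μ A = (p : ℝ≥0∞)⁻¹ *
      ∑ j ∈ Finset.range p, (if z j ∈ A then (1:ℝ≥0∞) else 0) := by
    intro A
    rw [hμ, Measure.smul_apply, smul_eq_mul, hsum]
  have hpne : (p : ℝ≥0∞) ≠ 0 := by exact_mod_cast hp.ne'
  have hptop : (p : ℝ≥0∞) ≠ ⊤ := ENNReal.natCast_ne_top p
  have hfull : ∀ A : Set ℝ, (∀ j, z j ∈ A) → μ A = 1 := by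
    intro A hA
    rw [happly]
    simp only [hA, if_true, Finset.sum_const, Finset.card_range, nsmul_eq_mul, mul_one]
    exact ENNReal.inv_mul_cancel hpne hptop
  refine ⟨μ, ⟨by simpa using hfull univ (fun j => mem_univ _)⟩, hfull _ hz, ?_⟩
  intro A _
  rw [happly, happly]
  congr 1
  have hSmem : ∀ j, z j ∈ S ⁻¹' A ↔ z (j+1) ∈ A := by
    intro j; rw [Set.mem_preimage, hSz j]
  have : ∀ j, (if z j ∈ S ⁻¹' A then (1:ℝ≥0∞) else 0) = (if z (j+1) ∈ A then 1 else 0) := by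
    intro j; simp [hSmem j]
  rw [Finset.sum_congr rfl (fun j _ => this j)]
  -- now reindex
  have h2 : ∑ j ∈ Finset.range p, (if z (j+1) ∈ A then (1:ℝ≥0∞) else 0) + (if z 0 ∈ A then 1 else 0)
      = ∑ j ∈ Finset.range p, (if z j ∈ A then (1:ℝ≥0∞) else 0) + (if z p ∈ A then 1 else 0) := by
    rw [← Finset.sum_range_succ' (fun j => if z j ∈ A then (1:ℝ≥0∞) else 0) p,
        ← Finset.sum_range_succ (fun j => if z j ∈ A then (1:ℝ≥0∞) else 0) p]
  rw [hper] at h2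
  exact (ENNReal.add_left_inj (by split_ifs <;> simp)).mp h2


set_option maxHeartbeats 2000000 in
/-- Any interval translation map `S` on `[0,1)` admits an invariant
Borel probability measure. The ITM is given by partition points
`0 = t 0 < t 1 < … < t n = 1` and translation constants `c 1, …, c n` with
`0 ≤ t (k-1) + c k` and `t k + c k ≤ 1`, via `S x = x + c k` on `[t (k-1), t k)`. -/
theorem itm_exists_invariant_measure
    (n : ℕ) (hn : 0 < n) (t c : ℕ → ℝ) (S : ℝ → ℝ)
    (ht0 : t 0 = 0) (htn : t n = 1)
    (htmono : ∀ k, k < n → t k < t (k + 1))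
    (hc : ∀ k, 1 ≤ k → k ≤ n → 0 ≤ t (k - 1) + c k ∧ t k + c k ≤ 1)
    (hS : ∀ k, 1 ≤ k → k ≤ n → ∀ x ∈ Ico (t (k - 1)) (t k), S x = x + c k) :
    ∃ μ : Measure ℝ, IsProbabilityMeasure μ ∧ μ (Ico (0 : ℝ) 1) = 1 ∧
      ∀ A : Set ℝ, MeasurableSet A → μ (S ⁻¹' A) = μ A := by
  classical
  set I : Set ℝ := Ico (0:ℝ) 1 with hIdef
  -- monotonicity of the partition points
  have tmono : ∀ j k : ℕ, j ≤ k → k ≤ n → t j ≤ t k := by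
    intro j k hjk hkn
    induction k with
    | zero => simp_all
    | succ q ih =>
      rcases Nat.lt_or_ge j (q+1) with h | h
      · have h1 : t j ≤ t q := ih (by omega) (by omega)
        exact h1.trans (htmono q (by omega)).le
      · have : j = q + 1 := by omega
        subst this; exact le_refl _
  have tstrict : ∀ j k : ℕ, j < k → k ≤ n → t j < t k := by
    intro j k hjk hkn
    have h1 : t j ≤ t (k-1) := tmono j (k-1) (by omega) (by omega)
    have h2 : t (k-1) < t k := by
      have := htmono (k-1) (by omega)
      have hk : k - 1 + 1 = k := by omega
      rwa [hk] at this
    linarith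
  -- index lemmas
  have hidx : ∀ x, 0 ≤ x → x < 1 → ∃ k, 1 ≤ k ∧ k ≤ n ∧ t (k-1) ≤ x ∧ x < t k := by
    intro x hx0 hx1
    set k0 := Nat.findGreatest (fun k => t k ≤ x) n with hk0
    have hk0n : k0 ≤ n := Nat.findGreatest_le n
    have hPk0 : t k0 ≤ x := by
      rcases Nat.eq_zero_or_pos k0 with h | h
      · rw [h, ht0]; exact hx0
      · exact Nat.findGreatest_spec (P := fun k => t k ≤ x) (Nat.zero_le n)
          (by show t 0 ≤ x; rw [ht0]; exact hx0)
    have hk0lt : k0 < n := by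
      rcases Nat.lt_or_ge k0 n with h | h
      · exact h
      · exfalso; have : k0 = n := le_antisymm hk0n h
        rw [this, htn] at hPk0; linarith
    have hnot : ¬ (t (k0 + 1) ≤ x) :=
      Nat.findGreatest_is_greatest (P := fun k => t k ≤ x) (n := n) (by omega) (by omega)
    exact ⟨k0 + 1, by omega, by omega, by simpa using hPk0, by linarith [lt_of_not_ge hnot]⟩
  have hidx' : ∀ y, 0 < y → y ≤ 1 → ∃ k, 1 ≤ k ∧ k ≤ n ∧ t (k-1) < y ∧ y ≤ t k := by
    intro y hy0 hy1
    set k0 := Nat.findGreatest (fun k => t k < y) n with hk0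
    have hk0n : k0 ≤ n := Nat.findGreatest_le n
    have hPk0 : t k0 < y := by
      rcases Nat.eq_zero_or_pos k0 with h | h
      · rw [h, ht0]; exact hy0
      · exact Nat.findGreatest_spec (P := fun k => t k < y) (Nat.zero_le n)
          (by show t 0 < y; rw [ht0]; exact hy0)
    have hk0lt : k0 < n := by
      rcases Nat.lt_or_ge k0 n with h | h
      · exact h
      · exfalso; have : k0 = n := le_antisymm hk0n h
        rw [this, htn] at hPk0; linarith
    have hnot : ¬ (t (k0 + 1) < y) :=
      Nat.findGreatest_is_greatest (P := fun k => t k < y) (n := n) (by omega) (by omega)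
    exact ⟨k0 + 1, by omega, by omega, by simpa using hPk0, by linarith [le_of_not_gt hnot]⟩
  have hsub : ∀ k, 1 ≤ k → k ≤ n → Ico (t (k-1)) (t k) ⊆ I := by
    intro k hk1 hkn x hx
    constructor
    · have : t 0 ≤ t (k-1) := tmono 0 (k-1) (Nat.zero_le _) (by omega)
      rw [ht0] at this; linarith [hx.1]
    · have : t k ≤ t n := tmono k n (by omega) (le_refl n)
      rw [htn] at this; linarith [hx.2]
  -- uniqueness of the index
  have huniq : ∀ x k k', 1 ≤ k → k ≤ n → x ∈ Ico (t (k-1)) (t k) →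
      1 ≤ k' → k' ≤ n → x ∈ Ico (t (k'-1)) (t k') → k = k' := by
    intro x k k' hk1 hkn hx hk'1 hk'n hx'
    by_contra hne
    rcases Nat.lt_or_ge k k' with h | h
    · have : t k ≤ t (k'-1) := tmono k (k'-1) (by omega) (by omega)
      linarith [hx.2, hx'.1]
    · have hlt : k' < k := by omega
      have : t k' ≤ t (k-1) := tmono k' (k-1) (by omega) (by omega)
      linarith [hx.1, hx'.2]
  -- the measurable model of S
  set Sb : ℝ → ℝ := fun x =>
    ∑ k ∈ Finset.Icc 1 n, (Ico (t (k-1)) (t k)).indicator (fun y => y + c k) x with hSbdef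
  have hSbmeas : Measurable Sb := by
    apply Finset.measurable_sum
    intro k _
    exact (measurable_id.add_const _).indicator measurableSet_Ico
  have hSbeq : ∀ k, 1 ≤ k → k ≤ n → ∀ x ∈ Ico (t (k-1)) (t k), Sb x = x + c k := by
    intro k hk1 hkn x hx
    simp only [hSbdef]
    rw [Finset.sum_eq_single k]
    · rw [Set.indicator_of_mem hx]
    · intro k' hk' hne
      simp only [Finset.mem_Icc] at hk'
      rw [Set.indicator_of_notMem]
      intro hx'
      exact hne (huniq x k' k hk'.1 hk'.2 hx' hk1 hkn hx)
    · intro h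
      exact absurd (Finset.mem_Icc.mpr ⟨hk1, hkn⟩) h
  have hSbout : ∀ x, x ∉ I → Sb x = 0 := by
    intro x hx
    simp only [hSbdef]
    apply Finset.sum_eq_zero
    intro k hk
    simp only [Finset.mem_Icc] at hk
    rw [Set.indicator_of_notMem]
    intro hx'
    exact hx (hsub k hk.1 hk.2 hx')
  have hSbI : ∀ x, Sb x ∈ I := by
    intro x
    by_cases hx : x ∈ I
    · obtain ⟨k, hk1, hkn, h1, h2⟩ := hidx x hx.1 hx.2
      rw [hSbeq k hk1 hkn x ⟨h1, h2⟩]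
      obtain ⟨hc1, hc2⟩ := hc k hk1 hkn
      exact ⟨by linarith, by linarith⟩
    · rw [hSbout x hx]; exact ⟨le_refl 0, by norm_num⟩
  have hSbS : ∀ x ∈ I, Sb x = S x := by
    intro x hx
    obtain ⟨k, hk1, hkn, h1, h2⟩ := hidx x hx.1 hx.2
    rw [hSbeq k hk1 hkn x ⟨h1, h2⟩, hS k hk1 hkn x ⟨h1, h2⟩]
  have hSbit : ∀ (i : ℕ) x, x ∈ I → Sb^[i] x ∈ I := by
    intro i
    induction i with
    | zero => intro x hx; simpa using hx
    | succ q ih =>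
      intro x hx
      rw [Function.iterate_succ_apply]
      exact ih _ (hSbI x)
  have hSbitmeas : ∀ i : ℕ, Measurable (Sb^[i]) := fun i => hSbmeas.iterate i
  -- the Cesàro averages
  set a : ℕ → Set ℝ → ℝ :=
    fun m A => (∑ i ∈ Finset.range m, (volume (Sb^[i] ⁻¹' A ∩ I)).toReal) / m with hadef
  have hvolI : volume I = 1 := by rw [hIdef, Real.volume_Ico]; norm_num
  have hvol1 : ∀ (i : ℕ) (A : Set ℝ), volume (Sb^[i] ⁻¹' A ∩ I) ≤ 1 := by
    intro i A
    calc volume (Sb^[i] ⁻¹' A ∩ I) ≤ volume I := measure_mono inter_subset_right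
      _ = 1 := hvolI
  have hvolne : ∀ (i : ℕ) (A : Set ℝ), volume (Sb^[i] ⁻¹' A ∩ I) ≠ ⊤ :=
    fun i A => (lt_of_le_of_lt (hvol1 i A) one_lt_top).ne
  have hvolr : ∀ (i : ℕ) (A : Set ℝ), (volume (Sb^[i] ⁻¹' A ∩ I)).toReal ∈ Icc (0:ℝ) 1 := by
    intro i A
    refine ⟨ENNReal.toReal_nonneg, ?_⟩
    rw [show (1:ℝ) = (1:ℝ≥0∞).toReal by simp]
    exact ENNReal.toReal_mono one_ne_top (hvol1 i A)
  have habd : ∀ m A, a m A ∈ Icc (0:ℝ) 1 := by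
    intro m A
    rw [hadef]
    constructor
    · apply div_nonneg
      · exact Finset.sum_nonneg fun i _ => (hvolr i A).1
      · exact Nat.cast_nonneg m
    · rcases Nat.eq_zero_or_pos m with h | h
      · simp [h]
      · rw [div_le_one (by exact_mod_cast h)]
        calc ∑ i ∈ Finset.range m, (volume (Sb^[i] ⁻¹' A ∩ I)).toReal
            ≤ ∑ _i ∈ Finset.range m, (1:ℝ) := Finset.sum_le_sum fun i _ => (hvolr i A).2
          _ = m := by simp
  -- the ultrafilter
  set U : Ultrafilter ℕ := Ultrafilter.of atTop with hUdef
  have hUle : (U : Filter ℕ) ≤ atTop := Ultrafilter.of_le atTop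
  have hulim : ∀ f : ℕ → ℝ, (∀ m, f m ∈ Icc (0:ℝ) 1) →
      ∃ L, L ∈ Icc (0:ℝ) 1 ∧ Tendsto f (U : Filter ℕ) (𝓝 L) := by
    intro f hf
    obtain ⟨L, hL, h⟩ := isCompact_Icc.ultrafilter_le_nhds (U.map f)
      (by simpa using (Filter.univ_mem' hf : f ⁻¹' Icc (0:ℝ) 1 ∈ (U : Filter ℕ)))
    exact ⟨L, hL, h⟩
  have hlimex : ∀ A : Set ℝ, ∃ L, L ∈ Icc (0:ℝ) 1 ∧
      Tendsto (fun m => a m A) (U : Filter ℕ) (𝓝 L) := fun A => hulim _ (fun m => habd m A)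
  choose Φ hΦmem hΦtend using hlimex
  have hΦ0 : ∀ A, 0 ≤ Φ A := fun A => (hΦmem A).1
  have hΦ1 : ∀ A, Φ A ≤ 1 := fun A => (hΦmem A).2
  have hΦmono : ∀ A B : Set ℝ, A ⊆ B → Φ A ≤ Φ B := by
    intro A B hAB
    refine le_of_tendsto_of_tendsto' (hΦtend A) (hΦtend B) ?_
    intro m
    rw [hadef]
    simp only
    have hnum : (∑ i ∈ Finset.range m, (volume (Sb^[i] ⁻¹' A ∩ I)).toReal)
        ≤ ∑ i ∈ Finset.range m, (volume (Sb^[i] ⁻¹' B ∩ I)).toReal :=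
      Finset.sum_le_sum fun i _ => ENNReal.toReal_mono (hvolne i B)
        (measure_mono (inter_subset_inter_left I (preimage_mono hAB)))
    rw [div_eq_mul_inv, div_eq_mul_inv]
    exact mul_le_mul_of_nonneg_right hnum (inv_nonneg.mpr (Nat.cast_nonneg m))
  -- binary additivity
  have hΦadd : ∀ A B : Set ℝ, MeasurableSet B → Disjoint A B → Φ (A ∪ B) = Φ A + Φ B := by
    intro A B hBm hABd
    have hpt : ∀ m, a m (A ∪ B) = a m A + a m B := by
      intro m
      have hterm : ∀ i : ℕ, (volume (Sb^[i] ⁻¹' (A ∪ B) ∩ I)).toReal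
          = (volume (Sb^[i] ⁻¹' A ∩ I)).toReal + (volume (Sb^[i] ⁻¹' B ∩ I)).toReal := by
        intro i
        have hset : Sb^[i] ⁻¹' (A ∪ B) ∩ I = (Sb^[i] ⁻¹' A ∩ I) ∪ (Sb^[i] ⁻¹' B ∩ I) := by
          rw [Set.preimage_union, Set.union_inter_distrib_right]
        rw [hset, measure_union ((hABd.preimage _).mono inter_subset_left inter_subset_left)
          ((hSbitmeas i hBm).inter measurableSet_Ico),
          ENNReal.toReal_add (hvolne i A) (hvolne i B)]
      rw [hadef]
      simp only
      rw [Finset.sum_congr rfl (fun i _ => hterm i), Finset.sum_add_distrib, add_div]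
    have h2 : Tendsto (fun m => a m A + a m B) (U : Filter ℕ) (𝓝 (Φ A + Φ B)) :=
      (hΦtend A).add (hΦtend B)
    have h1 : Tendsto (fun m => a m (A ∪ B)) (U : Filter ℕ) (𝓝 (Φ A + Φ B)) := by
      rw [tendsto_congr hpt]; exact h2
    exact tendsto_nhds_unique (hΦtend (A ∪ B)) h1
  -- invariance
  have hΦinv : ∀ A : Set ℝ, Φ (Sb ⁻¹' A) = Φ A := by
    intro A
    set g : ℕ → ℝ := fun i => (volume (Sb^[i] ⁻¹' A ∩ I)).toReal with hgdef
    have hpt : ∀ m, a m (Sb ⁻¹' A) = a m A + (g m - g 0) / m := by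
      intro m
      have hterm : ∀ i : ℕ, (volume (Sb^[i] ⁻¹' (Sb ⁻¹' A) ∩ I)).toReal = g (i+1) := by
        intro i
        have hpre : Sb^[i] ⁻¹' (Sb ⁻¹' A) = Sb^[i+1] ⁻¹' A := by
          ext x
          simp only [Set.mem_preimage, Function.iterate_succ_apply']
        rw [hgdef]
        simp only
        rw [hpre]
      rw [hadef]
      simp only
      rw [Finset.sum_congr rfl (fun i _ => hterm i)]
      have hshift : ∑ i ∈ Finset.range m, g (i+1) = (∑ i ∈ Finset.range m, g i) + g m - g 0 := by
        have h1 := Finset.sum_range_succ' g m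
        have h2 := Finset.sum_range_succ g m
        linarith
      rw [hshift]
      ring
    have herr : Tendsto (fun m : ℕ => (g m - g 0) / m) atTop (𝓝 0) := by
      apply squeeze_zero_norm (a := fun m : ℕ => 1 / (m:ℝ))
      · intro m
        have habs : |g m - g 0| ≤ 1 := by
          have h1 := (hvolr m A).1
          have h2 := (hvolr m A).2
          have h3 := (hvolr 0 A).1
          have h4 := (hvolr 0 A).2
          rw [abs_le]
          constructor
          · simp only [hgdef]; linarith
          · simp only [hgdef]; linarith
        rw [Real.norm_eq_abs, abs_div, Nat.abs_cast, div_eq_mul_inv,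
          div_eq_mul_inv]
        exact mul_le_mul_of_nonneg_right habs (inv_nonneg.mpr (Nat.cast_nonneg m))
      · have h5 : Tendsto (fun m : ℕ => ((m:ℝ))⁻¹) atTop (𝓝 0) :=
          tendsto_inv_atTop_zero.comp (tendsto_natCast_atTop_atTop (R := ℝ))
        exact h5.congr (fun m => (one_div (m:ℝ)).symm)
    have h2 : Tendsto (fun m => a m A + (g m - g 0) / m) (U : Filter ℕ) (𝓝 (Φ A + 0)) :=
      (hΦtend A).add (herr.mono_left hUle)
    rw [add_zero] at h2
    have h1 : Tendsto (fun m => a m (Sb ⁻¹' A)) (U : Filter ℕ) (𝓝 (Φ A)) := by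
      rw [tendsto_congr hpt]; exact h2
    exact tendsto_nhds_unique (hΦtend _) h1
  -- Φ only sees I
  have hΦI : ∀ A : Set ℝ, Φ (A ∩ I) = Φ A := by
    intro A
    have hpt : ∀ m, a m (A ∩ I) = a m A := by
      intro m
      rw [hadef]
      simp only
      congr 1
      apply Finset.sum_congr rfl
      intro i _
      congr 1
      congr 1
      ext x
      simp only [Set.mem_inter_iff, Set.mem_preimage]
      constructor
      · rintro ⟨⟨h1, _⟩, h2⟩; exact ⟨h1, h2⟩
      · rintro ⟨h1, h2⟩; exact ⟨⟨h1, hSbit i x h2⟩, h2⟩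
    have h1 : Tendsto (fun m => a m (A ∩ I)) (U : Filter ℕ) (𝓝 (Φ A)) := by
      rw [tendsto_congr hpt]; exact hΦtend A
    exact tendsto_nhds_unique (hΦtend _) h1
  -- values on half-lines
  set J : ℝ → ℝ := fun b => Φ (Iio b) with hJdef
  have hJconst : ∀ (b : ℝ) (r : ℝ), (∀ m : ℕ, 1 ≤ m → a m (Iio b) = r) → J b = r := by
    intro b r h
    have h1 : Tendsto (fun m => a m (Iio b)) (U : Filter ℕ) (𝓝 r) := by
      apply Tendsto.congr' ?_ tendsto_const_nhds
      apply (eventually_ge_atTop 1).filter_mono hUle |>.mono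
      intro m hm
      exact (h m hm).symm
    exact tendsto_nhds_unique (hΦtend _) h1
  have hJ1' : ∀ b : ℝ, 1 ≤ b → J b = 1 := by
    intro b hb
    apply hJconst
    intro m hm
    rw [hadef]
    simp only
    have : ∀ i ∈ Finset.range m, (volume (Sb^[i] ⁻¹' (Iio b) ∩ I)).toReal = 1 := by
      intro i _
      have hset : Sb^[i] ⁻¹' (Iio b) ∩ I = I := by
        apply Set.inter_eq_right.mpr
        intro x hx
        have := hSbit i x hx
        simp only [Set.mem_preimage, Set.mem_Iio]
        rw [hIdef] at this
        exact lt_of_lt_of_le this.2 hb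
      rw [hset, hvolI]
      simp
    rw [Finset.sum_congr rfl this]
    simp only [Finset.sum_const, Finset.card_range, nsmul_eq_mul, mul_one]
    field_simp
  have hJ0' : ∀ b : ℝ, b ≤ 0 → J b = 0 := by
    intro b hb
    apply hJconst
    intro m hm
    rw [hadef]
    simp only
    have : ∀ i ∈ Finset.range m, (volume (Sb^[i] ⁻¹' (Iio b) ∩ I)).toReal = 0 := by
      intro i _
      have hset : Sb^[i] ⁻¹' (Iio b) ∩ I = ∅ := by
        apply Set.eq_empty_of_forall_notMem
        intro x hx
        have h1 := hSbit i x hx.2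
        have h2 : Sb^[i] x < b := hx.1
        rw [hIdef] at h1
        linarith [h1.1]
      rw [hset]
      simp
    rw [Finset.sum_congr rfl this]
    simp
  have hJmono : Monotone J := fun u v huv => hΦmono _ _ (Iio_subset_Iio huv)
  have hJ0 : ∀ x, 0 ≤ J x := fun x => hΦ0 _
  have hJ1 : ∀ x, J x ≤ 1 := fun x => hΦ1 _
  have hIco : ∀ u v : ℝ, u ≤ v → Φ (Ico u v) = J v - J u := by
    intro u v huv
    have h1 : Φ (Iio u ∪ Ico u v) = Φ (Iio u) + Φ (Ico u v) := by
      apply hΦadd _ _ measurableSet_Ico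
      rw [Set.disjoint_left]
      intro x hx hx'
      exact absurd hx'.1 (not_le.mpr hx)
    rw [Iio_union_Ico_eq_Iio huv] at h1
    rw [hJdef]
    simp only
    linarith
  -- the clamped endpoints
  set mk : ℕ → ℝ → ℝ := fun k b => max (t (k-1)) (min (t k) (b - c k)) with hmkdef
  have hmk1 : ∀ k b, t (k-1) ≤ mk k b := fun k b => le_max_left _ _
  have hmk2 : ∀ k b, k ≤ n → mk k b ≤ t k := by
    intro k b hkn
    rw [hmkdef]
    simp only
    apply max_le (tmono (k-1) k (by omega) hkn) (min_le_left _ _)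
  have hdecomp : ∀ b : ℝ, Sb ⁻¹' (Iio b) ∩ I = ⋃ k ∈ Finset.Icc 1 n, Ico (t (k-1)) (mk k b) := by
    intro b
    ext x
    simp only [Set.mem_inter_iff, Set.mem_preimage, Set.mem_Iio, Set.mem_iUnion, Finset.mem_Icc]
    constructor
    · rintro ⟨hSbx, hxI⟩
      obtain ⟨k, hk1, hkn, h1, h2⟩ := hidx x hxI.1 hxI.2
      refine ⟨k, ⟨hk1, hkn⟩, h1, ?_⟩
      rw [hSbeq k hk1 hkn x ⟨h1, h2⟩] at hSbx
      have hxlt : x < min (t k) (b - c k) := lt_min h2 (by linarith)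
      rw [hmkdef]
      simp only
      exact lt_of_lt_of_le hxlt (le_max_right _ _)
    · rintro ⟨k, ⟨hk1, hkn⟩, h1, h2⟩
      have hlt : t (k-1) < mk k b := lt_of_le_of_lt h1 h2
      have hmax : mk k b = min (t k) (b - c k) := by
        rcases max_cases (t (k-1)) (min (t k) (b - c k)) with ⟨heq, hle⟩ | ⟨heq, hlt'⟩
        · exfalso; rw [hmkdef] at hlt; simp only at hlt; rw [heq] at hlt; exact lt_irrefl _ hlt
        · rw [hmkdef]; simp only; rw [heq]
      have hx2 : x < min (t k) (b - c k) := by rw [← hmax]; exact h2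
      have hxmem : x ∈ Ico (t (k-1)) (t k) := ⟨h1, lt_of_lt_of_le hx2 (min_le_left _ _)⟩
      constructor
      · rw [hSbeq k hk1 hkn x hxmem]
        have := lt_of_lt_of_le hx2 (min_le_right _ _)
        linarith
      · exact hsub k hk1 hkn hxmem
  have hdisj : ∀ b : ℝ, (↑(Finset.Icc 1 n) : Set ℕ).PairwiseDisjoint
      (fun k => Ico (t (k-1)) (mk k b)) := by
    intro b k hk k' hk' hne
    simp only [Finset.coe_Icc, Set.mem_Icc] at hk hk'
    have hsubk : ∀ j, 1 ≤ j → j ≤ n → Ico (t (j-1)) (mk j b) ⊆ Ico (t (j-1)) (t j) :=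
      fun j h1 h2 => Ico_subset_Ico (le_refl _) (hmk2 j b h2)
    apply Set.disjoint_of_subset (hsubk k hk.1 hk.2) (hsubk k' hk'.1 hk'.2)
    rw [Set.disjoint_left]
    intro x hx hx'
    exact hne (huniq x k k' hk.1 hk.2 hx hk'.1 hk'.2 hx')
  -- finite additivity over the decomposition
  have hΦsum : ∀ (E : ℕ → Set ℝ), (∀ k ∈ Finset.Icc 1 n, MeasurableSet (E k)) →
      (↑(Finset.Icc 1 n) : Set ℕ).PairwiseDisjoint E →
      Φ (⋃ k ∈ Finset.Icc 1 n, E k) = ∑ k ∈ Finset.Icc 1 n, Φ (E k) := by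
    intro E hEm hEd
    have hpt : ∀ m, a m (⋃ k ∈ Finset.Icc 1 n, E k) = ∑ k ∈ Finset.Icc 1 n, a m (E k) := by
      intro m
      have hterm : ∀ i : ℕ, (volume (Sb^[i] ⁻¹' (⋃ k ∈ Finset.Icc 1 n, E k) ∩ I)).toReal
          = ∑ k ∈ Finset.Icc 1 n, (volume (Sb^[i] ⁻¹' (E k) ∩ I)).toReal := by
        intro i
        have hset : Sb^[i] ⁻¹' (⋃ k ∈ Finset.Icc 1 n, E k) ∩ I
            = ⋃ k ∈ Finset.Icc 1 n, (Sb^[i] ⁻¹' (E k) ∩ I) := by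
          rw [Set.preimage_iUnion₂]
          ext x
          simp only [Set.mem_inter_iff, Set.mem_iUnion]
          tauto
        rw [hset, measure_biUnion_finset ?_ (fun k hk => (hSbitmeas i (hEm k hk)).inter
          measurableSet_Ico)]
        · exact ENNReal.toReal_sum (fun k _ => hvolne i (E k))
        · intro k hk k' hk' hne
          exact ((hEd hk hk' hne).preimage _).mono inter_subset_left inter_subset_left
      rw [hadef]
      simp only
      rw [Finset.sum_congr rfl (fun i _ => hterm i), Finset.sum_comm, Finset.sum_div]
    have h2 : Tendsto (fun m => ∑ k ∈ Finset.Icc 1 n, a m (E k)) (U : Filter ℕ)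
        (𝓝 (∑ k ∈ Finset.Icc 1 n, Φ (E k))) :=
      tendsto_finset_sum _ (fun k _ => hΦtend (E k))
    have h1 : Tendsto (fun m => a m (⋃ k ∈ Finset.Icc 1 n, E k)) (U : Filter ℕ)
        (𝓝 (∑ k ∈ Finset.Icc 1 n, Φ (E k))) := by
      rw [tendsto_congr hpt]; exact h2
    exact tendsto_nhds_unique (hΦtend _) h1
  -- the functional equation
  have hstar : ∀ b : ℝ, J b = ∑ k ∈ Finset.Icc 1 n, (J (mk k b) - J (t (k-1))) := by
    intro b
    have h1 : J b = Φ (Sb ⁻¹' (Iio b)) := (hΦinv _).symm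
    have h2 : Φ (Sb ⁻¹' (Iio b)) = Φ (Sb ⁻¹' (Iio b) ∩ I) := (hΦI _).symm
    rw [h1, h2, hdecomp b, hΦsum _ (fun k _ => measurableSet_Ico) (hdisj b)]
    apply Finset.sum_congr rfl
    intro k hk
    simp only [Finset.mem_Icc] at hk
    exact hIco _ _ (hmk1 k b)
  -- left limit machinery
  have hseq : ∀ x : ℝ, Tendsto (fun i : ℕ => x - 1/(i+1)) atTop (𝓝[<] x) := by
    intro x
    rw [tendsto_nhdsWithin_iff]
    constructor
    · have h0 : Tendsto (fun i : ℕ => 1/((i:ℝ)+1)) atTop (𝓝 0) :=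
        tendsto_one_div_add_atTop_nhds_zero_nat
      have h1 := (tendsto_const_nhds (x := x) (f := (atTop : Filter ℕ))).sub h0
      simpa using h1
    · apply Eventually.of_forall
      intro i
      simp only [Set.mem_Iio]
      have : 0 < 1/((i:ℝ)+1) := by positivity
      linarith
  have hleft : ∀ (g : ℝ → ℝ), Monotone g → ∀ x : ℝ,
      Tendsto (fun i : ℕ => g (x - 1/(i+1))) atTop (𝓝 (leftLim g x)) := by
    intro g hg x
    exact (hg.tendsto_leftLim x).comp (hseq x)
  have hhat0 : ∀ x : ℝ, x ≤ 0 → leftLim J x = 0 := by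
    intro x hx
    have h1 : leftLim J x ≤ J x := hJmono.leftLim_le (le_refl x)
    have h2 : J (x-1) ≤ leftLim J x := hJmono.le_leftLim (by linarith)
    rw [hJ0' x hx] at h1
    rw [hJ0' (x-1) (by linarith)] at h2
    linarith
  have hhatnn : ∀ x : ℝ, 0 ≤ leftLim J x := by
    intro x
    have h2 : J (x-1) ≤ leftLim J x := hJmono.le_leftLim (by linarith)
    linarith [hJ0 (x-1)]
  by_cases hgood : ∀ k, 1 ≤ k → k ≤ n → leftLim J (t k) = J (t k)
  · -- GOOD CASE: no jumps at partition points
    have hjump0 : ∀ k, k ≤ n → leftLim J (t k) = J (t k) := by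
      intro k hk
      rcases Nat.eq_zero_or_pos k with h | h
      · subst h; rw [ht0, hhat0 0 (le_refl 0), hJ0' 0 (le_refl 0)]
      · exact hgood k h hk
    have hhatstar : ∀ b : ℝ, leftLim J b
        = ∑ k ∈ Finset.Icc 1 n, (leftLim J (mk k b) - leftLim J (t (k-1))) := by
      intro b
      have hL : Tendsto (fun i : ℕ => J (b - 1/(i+1))) atTop (𝓝 (leftLim J b)) :=
        hleft J hJmono b
      have hR : Tendsto (fun i : ℕ =>
            ∑ k ∈ Finset.Icc 1 n, (J (mk k (b - 1/(i+1))) - J (t (k-1))))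
          atTop (𝓝 (∑ k ∈ Finset.Icc 1 n, (leftLim J (mk k b) - leftLim J (t (k-1))))) := by
        apply tendsto_finset_sum
        intro k hk
        simp only [Finset.mem_Icc] at hk
        have hterm2 : leftLim J (t (k-1)) = J (t (k-1)) := hjump0 (k-1) (by omega)
        refine Tendsto.sub ?_ (by rw [hterm2]; exact tendsto_const_nhds)
        rcases le_or_gt b (t (k-1) + c k) with hcase1 | hcase1
        · have hmkconst : ∀ b' : ℝ, b' ≤ b → mk k b' = t (k-1) := by
            intro b' hb'
            rw [hmkdef]
            simp only
            apply max_eq_left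
            exact (min_le_right _ _).trans (by linarith)
          have heq : ∀ i : ℕ, J (mk k (b - 1/(i+1))) = J (t (k-1)) := by
            intro i
            have hpos : 0 < 1/((i:ℝ)+1) := by positivity
            rw [hmkconst _ (by linarith)]
          rw [hmkconst b (le_refl b), hjump0 (k-1) (by omega), tendsto_congr heq]
          exact tendsto_const_nhds
        · rcases le_or_gt b (t k + c k) with hcase2 | hcase2
          · -- middle case
            have hmkb : mk k b = b - c k := by
              rw [hmkdef]; simp only
              rw [min_eq_right (by linarith), max_eq_right (by linarith)]
            have hev : ∀ᶠ i : ℕ in atTop,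
                J ((b - c k) - 1/(i+1)) = J (mk k (b - 1/(i+1))) := by
              have h0 : Tendsto (fun i : ℕ => 1/((i:ℝ)+1)) atTop (𝓝 0) :=
                tendsto_one_div_add_atTop_nhds_zero_nat
              have h1 : ∀ᶠ i : ℕ in atTop, 1/((i:ℝ)+1) < b - (t (k-1) + c k) :=
                h0.eventually (eventually_lt_nhds (by linarith))
              apply h1.mono
              intro i hi
              have hpos : 0 < 1/((i:ℝ)+1) := by positivity
              have hmm : mk k (b - 1/(i+1)) = (b - 1/(i+1)) - c k := by
                rw [hmkdef]; simp only
                rw [min_eq_right (by linarith), max_eq_right (by linarith)]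
              rw [hmm]
              congr 1
              ring
            rw [hmkb]
            exact Filter.Tendsto.congr' hev (hleft J hJmono (b - c k))
          · -- high case
            have hmkb : mk k b = t k := by
              rw [hmkdef]; simp only
              rw [min_eq_left (by linarith), max_eq_right (tmono (k-1) k (by omega) hk.2)]
            have hev : ∀ᶠ i : ℕ in atTop, J (t k) = J (mk k (b - 1/(i+1))) := by
              have h0 : Tendsto (fun i : ℕ => 1/((i:ℝ)+1)) atTop (𝓝 0) :=
                tendsto_one_div_add_atTop_nhds_zero_nat
              have h1 : ∀ᶠ i : ℕ in atTop, 1/((i:ℝ)+1) < b - (t k + c k) :=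
                h0.eventually (eventually_lt_nhds (by linarith))
              apply h1.mono
              intro i hi
              have hmm : mk k (b - 1/(i+1)) = t k := by
                rw [hmkdef]; simp only
                rw [min_eq_left (by linarith), max_eq_right (tmono (k-1) k (by omega) hk.2)]
              rw [hmm]
            rw [hmkb, hjump0 k hk.2]
            exact Filter.Tendsto.congr' hev tendsto_const_nhds
      have hLR : Tendsto (fun i : ℕ => J (b - 1/(i+1))) atTop
          (𝓝 (∑ k ∈ Finset.Icc 1 n, (leftLim J (mk k b) - leftLim J (t (k-1))))) := by
        rw [tendsto_congr (fun i : ℕ => hstar (b - 1/(i+1)))]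
        exact hR
      exact tendsto_nhds_unique hL hLR
    -- the Stieltjes measure
    set μ : Measure ℝ := hJmono.stieltjesFunction.measure with hμdef
    have hRmono : Monotone (rightLim J) := hJmono.rightLim
    have hLRll : ∀ x : ℝ, leftLim (rightLim J) x = leftLim J x := by
      intro x
      apply le_antisymm
      · apply le_of_tendsto (hleft (rightLim J) hRmono x)
        apply Eventually.of_forall
        intro i
        apply hJmono.rightLim_le_leftLim
        have : 0 < 1/((i:ℝ)+1) := by positivity
        linarith
      · apply le_of_tendsto_of_tendsto' (hleft J hJmono x) (hleft (rightLim J) hRmono x)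
        intro i
        exact hJmono.le_rightLim (le_refl _)
    have hSFco : ⇑hJmono.stieltjesFunction = rightLim J :=
      funext fun y => hJmono.stieltjesFunction_eq y
    have hμIco : ∀ u v : ℝ, μ (Ico u v) = ENNReal.ofReal (leftLim J v - leftLim J u) := by
      intro u v
      rw [hμdef, StieltjesFunction.measure_Ico, hSFco, hLRll, hLRll]
    have hSF0 : ∀ x : ℝ, x < 0 → hJmono.stieltjesFunction x = 0 := by
      intro x hx
      rw [hJmono.stieltjesFunction_eq]
      apply le_antisymm
      · have h := hJmono.rightLim_le (show x < x/2 by linarith)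
        rw [hJ0' (x/2) (by linarith)] at h; exact h
      · have h := hJmono.le_rightLim (le_refl x)
        rw [hJ0' x hx.le] at h; exact h
    have hSF1 : ∀ x : ℝ, 1 ≤ x → hJmono.stieltjesFunction x = 1 := by
      intro x hx
      rw [hJmono.stieltjesFunction_eq]
      apply le_antisymm
      · have h := hJmono.rightLim_le (show x < x+1 by linarith)
        rw [hJ1' (x+1) (by linarith)] at h; exact h
      · have h := hJmono.le_rightLim (le_refl x)
        rw [hJ1' x hx] at h; exact h
    have hbot : Tendsto (⇑hJmono.stieltjesFunction) atBot (𝓝 0) := by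
      apply Tendsto.congr' _ tendsto_const_nhds
      filter_upwards [eventually_lt_atBot (0:ℝ)] with x hx
      exact (hSF0 x hx).symm
    have htop : Tendsto (⇑hJmono.stieltjesFunction) atTop (𝓝 1) := by
      apply Tendsto.congr' _ tendsto_const_nhds
      filter_upwards [eventually_ge_atTop (1:ℝ)] with x hx
      exact (hSF1 x hx).symm
    have hprob : IsProbabilityMeasure μ :=
      hJmono.stieltjesFunction.isProbabilityMeasure hbot htop
    haveI := hprob
    have hhat1 : leftLim J 1 = 1 := by
      have h := hjump0 n (le_refl n)
      rw [htn] at h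
      rw [h, hJ1' 1 (le_refl 1)]
    have hμI : μ I = 1 := by
      rw [hIdef, hμIco 0 1, hhat1, hhat0 0 (le_refl 0)]
      norm_num
    have hμIc : μ Iᶜ = 0 := by
      have h := measure_compl (μ := μ) (s := I) (hIdef ▸ measurableSet_Ico) (measure_ne_top μ I)
      rw [hμI, measure_univ] at h
      simpa using h
    have hnull : ∀ X : Set ℝ, μ X = μ (X ∩ I) := by
      intro X
      apply le_antisymm
      · calc μ X = μ ((X ∩ I) ∪ (X ∩ Iᶜ)) := by rw [Set.inter_union_compl]
          _ ≤ μ (X ∩ I) + μ (X ∩ Iᶜ) := measure_union_le _ _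
          _ ≤ μ (X ∩ I) + μ Iᶜ := add_le_add le_rfl (measure_mono inter_subset_right)
          _ = μ (X ∩ I) := by rw [hμIc, add_zero]
      · exact measure_mono inter_subset_left
    have hμIio0 : μ (Iio 0) = 0 := by
      have hcover : Iio (0:ℝ) = ⋃ i : ℕ, Ico (-(i:ℝ)-1) 0 := by
        ext x
        simp only [Set.mem_Iio, Set.mem_iUnion, Set.mem_Ico]
        constructor
        · intro hx
          obtain ⟨i, hi⟩ := exists_nat_ge (-x-1)
          exact ⟨i, by linarith, hx⟩
        · rintro ⟨i, _, h⟩; exact h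
      rw [hcover]
      apply measure_iUnion_null
      intro i
      rw [hμIco]
      have hile : -(i:ℝ)-1 ≤ 0 := by
        have : (0:ℝ) ≤ i := Nat.cast_nonneg i
        linarith
      rw [hhat0 0 (le_refl 0), hhat0 _ hile]
      simp
    have hμIio : ∀ x : ℝ, μ (Iio x) = ENNReal.ofReal (leftLim J x) := by
      intro x
      rcases le_or_gt x 0 with hx | hx
      · have h1 : μ (Iio x) = 0 := measure_mono_null (Iio_subset_Iio hx) hμIio0
        rw [h1, hhat0 x hx]
        simp
      · rw [← Iio_union_Ico_eq_Iio hx.le]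
        have h2 : μ (Iio 0 ∪ Ico 0 x) = μ (Ico 0 x) := by
          apply le_antisymm
          · calc μ (Iio 0 ∪ Ico 0 x) ≤ μ (Iio 0) + μ (Ico 0 x) := measure_union_le _ _
              _ = μ (Ico 0 x) := by rw [hμIio0, zero_add]
          · exact measure_mono subset_union_right
        rw [h2, hμIco, hhat0 0 (le_refl 0), sub_zero]
    have hμSbIio : ∀ x : ℝ, μ (Sb ⁻¹' (Iio x)) = ENNReal.ofReal (leftLim J x) := by
      intro x
      rw [hnull _, hdecomp x, measure_biUnion_finset (hdisj x) (fun k _ => measurableSet_Ico)]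
      have hterm : ∀ k ∈ Finset.Icc 1 n, μ (Ico (t (k-1)) (mk k x))
          = ENNReal.ofReal (leftLim J (mk k x) - leftLim J (t (k-1))) := fun k _ => hμIco _ _
      rw [Finset.sum_congr rfl hterm, ← ENNReal.ofReal_sum_of_nonneg, ← hhatstar x]
      intro k hk
      have h := hJmono.leftLim (hmk1 k x)
      linarith
    have hmap : μ.map Sb = μ := by
      apply Measure.ext_of_Ico
      intro u v huv
      have hlhs : μ (Sb ⁻¹' (Ico u v))
          = ENNReal.ofReal (leftLim J v) - ENNReal.ofReal (leftLim J u) := by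
        have hIcoeq : Ico u v = Iio v \ Iio u := by
          ext x
          simp only [Set.mem_Ico, Set.mem_diff, Set.mem_Iio, not_lt]
          tauto
        rw [hIcoeq, Set.preimage_diff,
          measure_diff (preimage_mono (Iio_subset_Iio huv.le))
            (hSbmeas measurableSet_Iio).nullMeasurableSet
            (by rw [hμSbIio]; exact ENNReal.ofReal_ne_top),
          hμSbIio, hμSbIio]
      rw [Measure.map_apply hSbmeas measurableSet_Ico, hlhs, hμIco,
        ENNReal.ofReal_sub _ (hhatnn u)]
    refine ⟨μ, hprob, hμI, ?_⟩
    intro A hA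
    have h1 : μ (S ⁻¹' A) = μ (Sb ⁻¹' A) := by
      rw [hnull (S ⁻¹' A), hnull (Sb ⁻¹' A)]
      congr 1
      ext x
      simp only [Set.mem_inter_iff, Set.mem_preimage]
      constructor
      · rintro ⟨h1, h2⟩
        refine ⟨?_, h2⟩
        rw [hSbS x h2]
        exact h1
      · rintro ⟨h1, h2⟩
        refine ⟨?_, h2⟩
        rw [← hSbS x h2]
        exact h1
    rw [h1, ← Measure.map_apply hSbmeas hA, hmap]
  · -- BAD CASE: a jump at some partition point; extract a periodic orbit
    push_neg at hgood
    obtain ⟨k₀, hk₀1, hk₀n, hk₀ne⟩ := hgood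
    set δ : ℝ := J (t k₀) - leftLim J (t k₀) with hδdef
    have hδ : 0 < δ := by
      have h1 : leftLim J (t k₀) ≤ J (t k₀) := hJmono.leftLim_le (le_refl _)
      rcases lt_or_eq_of_le h1 with h | h
      · rw [hδdef]; linarith
      · exact absurd h hk₀ne
    set Sl : ℝ → ℝ := fun y =>
      if h : ∃ k, 1 ≤ k ∧ k ≤ n ∧ t (k-1) < y ∧ y ≤ t k then y + c h.choose else 1 with hSldef
    have hSlspec : ∀ y : ℝ, (∃ k, 1 ≤ k ∧ k ≤ n ∧ t (k-1) < y ∧ y ≤ t k) →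
        ∃ k, 1 ≤ k ∧ k ≤ n ∧ t (k-1) < y ∧ y ≤ t k ∧ Sl y = y + c k := by
      intro y h
      obtain ⟨h1, h2, h3, h4⟩ := h.choose_spec
      refine ⟨h.choose, h1, h2, h3, h4, ?_⟩
      rw [hSldef]
      simp only
      rw [dif_pos h]
    have hex : ∀ y : ℝ, 0 < y → y ≤ 1 → ∃ k, 1 ≤ k ∧ k ≤ n ∧ t (k-1) < y ∧ y ≤ t k := hidx'
    have hSlmem : ∀ y : ℝ, 0 < y → y ≤ 1 → 0 < Sl y ∧ Sl y ≤ 1 := by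
      intro y hy0 hy1
      obtain ⟨k, h1, h2, h3, h4, h5⟩ := hSlspec y (hex y hy0 hy1)
      obtain ⟨hc1, hc2⟩ := hc k h1 h2
      rw [h5]
      constructor <;> linarith
    have hjmono : ∀ y : ℝ, 0 < y → y ≤ 1 →
        J y - leftLim J y ≤ J (Sl y) - leftLim J (Sl y) := by
      intro y hy0 hy1
      obtain ⟨k, hk1, hkn, hky1, hky2, hSly⟩ := hSlspec y (hex y hy0 hy1)
      set u : ℝ := y + c k with hudef
      have hcore : ∀ ε : ℝ, 0 < ε → ε ≤ y - t (k-1) →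
          J y - leftLim J y ≤ J u - J (u - ε) := by
        intro ε hε1 hε2
        have h1 : J (y - ε) ≤ leftLim J y := hJmono.le_leftLim (by linarith)
        have h2 : Φ (Ico (y-ε) y) = J y - J (y-ε) := hIco _ _ (by linarith)
        have h3 : Φ (Ico (u-ε) u) = J u - J (u-ε) := hIco _ _ (by linarith)
        have h4 : Ico (y-ε) y ⊆ Sb ⁻¹' (Ico (u-ε) u) := by
          intro x hx
          have hxmem : x ∈ Ico (t (k-1)) (t k) :=
            ⟨by linarith [hx.1], lt_of_lt_of_le hx.2 hky2⟩
          simp only [Set.mem_preimage]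
          rw [hSbeq k hk1 hkn x hxmem]
          constructor
          · rw [hudef]; linarith [hx.1]
          · rw [hudef]; linarith [hx.2]
        have h5 : Φ (Ico (y-ε) y) ≤ Φ (Ico (u-ε) u) := by
          calc Φ (Ico (y-ε) y) ≤ Φ (Sb ⁻¹' (Ico (u-ε) u)) := hΦmono _ _ h4
            _ = Φ (Ico (u-ε) u) := hΦinv _
        linarith
      have htend : Tendsto (fun i : ℕ => J u - J (u - 1/(i+1))) atTop
          (𝓝 (J u - leftLim J u)) := tendsto_const_nhds.sub (hleft J hJmono u)
      have hev : ∀ᶠ i : ℕ in atTop, J y - leftLim J y ≤ J u - J (u - 1/(i+1)) := by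
        have h0 : Tendsto (fun i : ℕ => 1/((i:ℝ)+1)) atTop (𝓝 0) :=
          tendsto_one_div_add_atTop_nhds_zero_nat
        have h1 : ∀ᶠ i : ℕ in atTop, 1/((i:ℝ)+1) ≤ y - t (k-1) :=
          h0.eventually (eventually_le_nhds (by linarith))
        apply h1.mono
        intro i hi
        exact hcore _ (by positivity) hi
      have hfinal : J y - leftLim J y ≤ J u - leftLim J u := ge_of_tendsto htend hev
      rw [hSly]
      exact hfinal
    have horb : ∀ m : ℕ, (0 < Sl^[m] (t k₀) ∧ Sl^[m] (t k₀) ≤ 1) ∧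
        δ ≤ J (Sl^[m] (t k₀)) - leftLim J (Sl^[m] (t k₀)) := by
      intro m
      induction m with
      | zero =>
        simp only [Function.iterate_zero_apply]
        refine ⟨⟨?_, ?_⟩, le_of_eq hδdef⟩
        · have h := tstrict 0 k₀ (by omega) hk₀n
          rwa [ht0] at h
        · have h := tmono k₀ n hk₀n (le_refl n)
          rwa [htn] at h
      | succ m ih =>
        rw [Function.iterate_succ_apply']
        obtain ⟨⟨ha1, ha2⟩, hb⟩ := ih
        exact ⟨hSlmem _ ha1 ha2, le_trans hb (hjmono _ ha1 ha2)⟩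
    have hfin : {y : ℝ | δ ≤ J y - leftLim J y}.Finite :=
      itm_jump_finite J hJmono hJ0 hJ1 δ hδ
    have hmapsto : Set.MapsTo (fun m : ℕ => Sl^[m] (t k₀)) Set.univ
        {y : ℝ | δ ≤ J y - leftLim J y} := fun m _ => (horb m).2
    obtain ⟨m1, -, m2, -, hne, heq⟩ :=
      Set.infinite_univ.exists_ne_map_eq_of_mapsTo hmapsto hfin
    obtain ⟨m, m', hlt, heq'⟩ : ∃ m m' : ℕ, m < m' ∧ Sl^[m'] (t k₀) = Sl^[m] (t k₀) := by
      rcases hne.lt_or_gt with h | h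
      · exact ⟨m1, m2, h, heq.symm⟩
      · exact ⟨m2, m1, h, heq⟩
    set w : ℝ := Sl^[m] (t k₀) with hwdef
    set p : ℕ := m' - m with hpdef
    have hp : 0 < p := by omega
    have hper : Sl^[p] w = w := by
      rw [hwdef, ← Function.iterate_add_apply]
      have hpm : p + m = m' := by omega
      rw [hpm, heq']
    have hwmem : ∀ i : ℕ, (0 < Sl^[i] w ∧ Sl^[i] w ≤ 1) := by
      intro i
      rw [hwdef, ← Function.iterate_add_apply]
      exact (horb (i + m)).1
    have hKex : ∀ i : ℕ, ∃ k, 1 ≤ k ∧ k ≤ n ∧ t (k-1) < Sl^[i] w ∧ Sl^[i] w ≤ t k ∧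
        Sl (Sl^[i] w) = Sl^[i] w + c k :=
      fun i => hSlspec _ (hex _ (hwmem i).1 (hwmem i).2)
    choose K hK1 hK2 hK3 hK4 hK5 using hKex
    have hrne : (Finset.range p).Nonempty := Finset.nonempty_range_iff.mpr hp.ne'
    set ε : ℝ := ((Finset.range p).inf' hrne (fun i => Sl^[i] w - t (K i - 1))) / 2 with hεdef
    have hinfpos : 0 < (Finset.range p).inf' hrne (fun i => Sl^[i] w - t (K i - 1)) := by
      rw [Finset.lt_inf'_iff]
      intro i _
      linarith [hK3 i]
    have hε : 0 < ε := by rw [hεdef]; linarith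
    have hεlt : ∀ i : ℕ, i < p → ε < Sl^[i] w - t (K i - 1) := by
      intro i hi
      have h1 : (Finset.range p).inf' hrne (fun i => Sl^[i] w - t (K i - 1))
          ≤ Sl^[i] w - t (K i - 1) := Finset.inf'_le _ (Finset.mem_range.mpr hi)
      rw [hεdef]
      linarith
    set z : ℕ → ℝ := fun i => Sl^[i % p] w - ε with hzdef
    have hzIco : ∀ i : ℕ, z i ∈ Ico (t (K (i % p) - 1)) (t (K (i % p))) := by
      intro i
      have hmod : i % p < p := Nat.mod_lt _ hp
      constructor
      · rw [hzdef]; simp only; linarith [hεlt _ hmod]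
      · rw [hzdef]; simp only; linarith [hK4 (i % p), hε]
    have hz : ∀ i : ℕ, z i ∈ Ico (0:ℝ) 1 := by
      intro i
      have h := hzIco i
      have h1 : t 0 ≤ t (K (i % p) - 1) := by
        apply tmono 0 _ (by omega)
        have := hK2 (i % p)
        omega
      have h2 : t (K (i % p)) ≤ t n := tmono _ n (hK2 (i % p)) (le_refl n)
      rw [ht0] at h1
      rw [htn] at h2
      exact ⟨le_trans h1 h.1, lt_of_lt_of_le h.2 h2⟩
    have hmod1 : ∀ i : ℕ, (i+1) % p = (i % p + 1) % p := by
      intro i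
      conv_lhs => rw [Nat.add_mod]
      rcases Nat.lt_or_ge 1 p with h | h
      · rw [Nat.mod_eq_of_lt h]
      · have hp1 : p = 1 := by omega
        simp [hp1]
    have hwnext : ∀ i : ℕ, Sl^[(i+1) % p] w = Sl (Sl^[i % p] w) := by
      intro i
      rw [hmod1 i]
      have hmod : i % p < p := Nat.mod_lt _ hp
      rcases Nat.lt_or_ge (i % p + 1) p with h | h
      · rw [Nat.mod_eq_of_lt h, Function.iterate_succ_apply']
      · have hip : i % p + 1 = p := by omega
        rw [hip, Nat.mod_self]
        have h2 : Sl (Sl^[i % p] w) = Sl^[i % p + 1] w :=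
          (Function.iterate_succ_apply' Sl _ w).symm
        rw [h2, hip, hper]
        simp
    have hSz : ∀ i : ℕ, S (z i) = z (i+1) := by
      intro i
      rw [hS (K (i % p)) (hK1 _) (hK2 _) (z i) (hzIco i)]
      rw [hzdef]
      simp only
      rw [hwnext i, hK5 (i % p)]
      ring
    have hzper : z p = z 0 := by
      rw [hzdef]
      simp only
      rw [Nat.mod_self, Nat.zero_mod]
    exact itm_periodic_invariant S p hp z hz hSz hzper
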